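/- For every vertex o reachable from s, the final representation produced by the truncated Bellman–Ford iteration with offset δ aggregates exactly the walks whose length lies between dist(s,o) and dist(s,o)+δ; that is, yᶠ(o) = ∑_{t=dist(s,o)}^{dist(s,o)+δ} ∑_{p ∈ P_t(s,o)} weight(p), where P_t(s,o) denotes the set of walks of length t from s to o in G. -/

import Mathlib

open Finset

/-- The weight of a walk: the product of the edge weights `wt v_{i-1} v_i` along the
walk, with the length-0 walk having weight 1. -/
def SimpleGraph.Walk.weight {V : Type*} {G : SimpleGraph V} {R : Type*} [CommSemiring R]
    (wt : V → V → R) {u v : V} (p : G.Walk u v) : R :=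
  (p.darts.map fun d => wt d.fst d.snd).prod

/-- `pathSum G wt t s o = ∑_{p ∈ P_t(s,o)} weight(p)`, the sum of the weights of all
walks of length `t` from `s` to `o` in `G`. -/
def pathSum {V : Type*} [Fintype V] [DecidableEq V] (G : SimpleGraph V) [DecidableRel G.Adj]
    {R : Type*} [CommSemiring R] (wt : V → V → R) (t : ℕ) (s o : V) : R :=
  ∑ p ∈ G.finsetWalkLength t s o, p.weight wt

open Classical in
/-- The truncated Bellman–Ford iterates `y_δ⁽ᵗ⁾` with source `s` and offset `δ`:
`y⁽⁰⁾(o) = 1` if `o = s` and `0` otherwise; for `t ≥ 1`, if `o` is reachable from `s`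
and `dist(s,o) ≤ t ≤ dist(s,o) + δ` then `o` aggregates, over the constrained edge set
(neighbors `u` reachable from `s` with `dist(s,u) < dist(s,o) + δ`), the messages
`y⁽ᵗ⁻¹⁾(u) * wt u o`, plus `y⁽⁰⁾(o)`; otherwise `y⁽ᵗ⁾(o) = y⁽ᵗ⁻¹⁾(o)`. -/
noncomputable def truncBF {V : Type*} [Fintype V] (G : SimpleGraph V)
    {R : Type*} [CommSemiring R] (wt : V → V → R) (s : V) (δ : ℕ) : ℕ → V → R
  | 0 => fun o => if o = s then 1 else 0
  | (t + 1) => fun o =>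
      if G.Reachable s o ∧ G.dist s o ≤ t + 1 ∧ t + 1 ≤ G.dist s o + δ then
        (∑ u ∈ Finset.univ.filter
            (fun u => G.Adj u o ∧ G.Reachable s u ∧ G.dist s u < G.dist s o + δ),
          truncBF G wt s δ t u * wt u o) + (if o = s then 1 else 0)
      else truncBF G wt s δ t o

section Helpers

variable {V : Type*} [Fintype V] [DecidableEq V] (G : SimpleGraph V) [DecidableRel G.Adj]
    {R : Type*} [CommSemiring R] (wt : V → V → R)

lemma weight_nil (u : V) : (SimpleGraph.Walk.nil : G.Walk u u).weight wt = 1 := rfl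

lemma weight_cons {u v w : V} (h : G.Adj u v) (p : G.Walk v w) :
    (SimpleGraph.Walk.cons h p).weight wt = wt u v * p.weight wt := by
  simp [SimpleGraph.Walk.weight]

lemma weight_reverse {u v : V} (p : G.Walk u v) :
    p.reverse.weight (Function.swap wt) = p.weight wt := by
  simp only [SimpleGraph.Walk.weight, SimpleGraph.Walk.darts_reverse, List.map_reverse,
    List.map_map, List.prod_reverse]
  congr 1

lemma pathSum_zero (s o : V) : pathSum G wt 0 s o = if o = s then 1 else 0 := by
  rcases eq_or_ne s o with rfl | h
  · simp [pathSum, SimpleGraph.finsetWalkLength, weight_nil]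
  · simp [pathSum, SimpleGraph.finsetWalkLength, h, Ne.symm h]

lemma pathSum_rev (n : ℕ) (s o : V) :
    pathSum G wt n s o = pathSum G (Function.swap wt) n o s := by
  unfold pathSum
  refine Finset.sum_nbij' (fun p => p.reverse) (fun p => p.reverse) ?_ ?_ ?_ ?_ ?_ <;>
    simp [SimpleGraph.mem_finsetWalkLength_iff, weight_reverse]

lemma pathSum_succ_front (n : ℕ) (u v : V) :
    pathSum G wt (n + 1) u v
      = ∑ w ∈ G.neighborFinset u, wt u w * pathSum G wt n w v := by
  unfold pathSum
  show ∑ p ∈ Finset.univ.biUnion _, _ = _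
  rw [Finset.sum_biUnion]
  · rw [SimpleGraph.neighborFinset_def, ← Finset.sum_set_coe]
    refine Finset.sum_congr rfl fun w _ => ?_
    rw [Finset.sum_map, Finset.mul_sum]
    refine Finset.sum_congr rfl fun p _ => ?_
    exact weight_cons _ _ _ _
  · rintro ⟨x, hx⟩ - ⟨y, hy⟩ - hxy
    simp only [Function.onFun]
    rw [Finset.disjoint_left]
    intro p hp hp'
    simp only [Finset.mem_map, Function.Embedding.coeFn_mk] at hp hp'
    obtain ⟨px, _, rfl⟩ := hp
    obtain ⟨py, _, hpe⟩ := hp'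
    cases hpe
    simp at hxy

lemma pathSum_succ_back (n : ℕ) (s o : V) :
    pathSum G wt (n + 1) s o
      = ∑ u ∈ Finset.univ.filter (fun u => G.Adj u o), pathSum G wt n s u * wt u o := by
  rw [pathSum_rev, pathSum_succ_front]
  have : G.neighborFinset o = Finset.univ.filter (fun u => G.Adj u o) := by
    ext x; simp [SimpleGraph.adj_comm]
  rw [this]
  refine Finset.sum_congr rfl fun u _ => ?_
  rw [← pathSum_rev]
  simp [Function.swap, mul_comm]

lemma pathSum_eq_zero_of_lt_dist {k : ℕ} {s o : V} (h : k < G.dist s o) :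
    pathSum G wt k s o = 0 := by
  rw [pathSum, Finset.sum_eq_zero]
  intro p hp
  rw [SimpleGraph.mem_finsetWalkLength_iff] at hp
  exact absurd (SimpleGraph.dist_le p) (by omega)

lemma pathSum_eq_zero_of_not_reachable {k : ℕ} {s o : V} (h : ¬ G.Reachable s o) :
    pathSum G wt k s o = 0 := by
  rw [pathSum, Finset.sum_eq_zero]
  intro p hp
  exact absurd p.reachable h

lemma dist_le_of_adj {s u o : V} (hr : G.Reachable s u) (h : G.Adj u o) :
    G.dist s o ≤ G.dist s u + 1 := by
  obtain ⟨p, hp⟩ := hr.exists_walk_length_eq_dist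
  have := SimpleGraph.dist_le (p.concat h)
  rwa [SimpleGraph.Walk.length_concat, hp] at this

lemma truncBF_key (s : V) (δ : ℕ) (t : ℕ) :
    ∀ o, G.Reachable s o → t ≤ G.dist s o + δ →
      truncBF G wt s δ t o = ∑ k ∈ Finset.range (t + 1), pathSum G wt k s o := by
  induction t with
  | zero =>
    intro o _ _
    simp [truncBF, pathSum_zero]
  | succ t ih =>
    intro o hr ht
    classical
    simp only [truncBF]
    rw [Finset.filter_congr_decidable]
    by_cases hd : G.dist s o ≤ t + 1
    · rw [if_pos ⟨hr, hd, ht⟩]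
      have hsum : ∀ u ∈ Finset.univ.filter
          (fun u => G.Adj u o ∧ G.Reachable s u ∧ G.dist s u < G.dist s o + δ),
          truncBF G wt s δ t u * wt u o
            = (∑ k ∈ Finset.range (t + 1), pathSum G wt k s u) * wt u o := by
        intro u hu
        rw [Finset.mem_filter] at hu
        obtain ⟨-, hadj, hru, hdu⟩ := hu
        rw [ih u hru (by have := dist_le_of_adj G hru hadj; omega)]
      rw [Finset.sum_congr rfl hsum]
      have hsub : Finset.univ.filter
          (fun u => G.Adj u o ∧ G.Reachable s u ∧ G.dist s u < G.dist s o + δ)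
          ⊆ Finset.univ.filter (fun u => G.Adj u o) := by
        intro u hu
        rw [Finset.mem_filter] at hu ⊢
        exact ⟨hu.1, hu.2.1⟩
      have hzero : ∀ u ∈ Finset.univ.filter (fun u => G.Adj u o),
          u ∉ Finset.univ.filter
            (fun u => G.Adj u o ∧ G.Reachable s u ∧ G.dist s u < G.dist s o + δ) →
          (∑ k ∈ Finset.range (t + 1), pathSum G wt k s u) * wt u o = 0 := by
        intro u hu hnu
        rw [Finset.mem_filter] at hu hnu
        rw [Finset.sum_eq_zero, zero_mul]
        intro k hk
        rw [Finset.mem_range] at hk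
        by_cases hru : G.Reachable s u
        · have hge : G.dist s o + δ ≤ G.dist s u := by
            by_contra hlt
            exact hnu ⟨Finset.mem_univ u, hu.2, hru, by omega⟩
          exact pathSum_eq_zero_of_lt_dist G wt (by omega)
        · exact pathSum_eq_zero_of_not_reachable G wt hru
      rw [Finset.sum_subset hsub hzero]
      rw [Finset.sum_congr rfl (fun u _ => Finset.sum_mul _ _ _), Finset.sum_comm]
      rw [Finset.sum_congr rfl
        (fun k _ => (pathSum_succ_back G wt k s o).symm : ∀ k ∈ Finset.range (t + 1), _)]
      conv_rhs => rw [Finset.sum_range_succ' (fun k => pathSum G wt k s o) (t + 1)]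
      congr 1
      by_cases hos : o = s <;> simp [hos, pathSum_zero]
    · rw [if_neg (by tauto)]
      rw [ih o hr (by omega)]
      conv_rhs => rw [Finset.sum_range_succ]
      rw [pathSum_eq_zero_of_lt_dist G wt (show t + 1 < G.dist s o by omega), add_zero]

end Helpers

/-- For every vertex `o` reachable from `s`, the final representation
`yᶠ(o) = y⁽ᵈⁱˢᵗ⁽ˢ,ᵒ⁾⁺ᵟ⁾(o)` produced by the truncated Bellman–Ford iteration with
offset `δ` aggregates exactly the walks of length between `dist(s,o)` and
`dist(s,o) + δ`: `yᶠ(o) = ∑_{t=dist(s,o)}^{dist(s,o)+δ} ∑_{p ∈ P_t(s,o)} weight(p)`. -/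
theorem truncBF_final_eq_pathSum {V : Type*} [Fintype V] [DecidableEq V]
    (G : SimpleGraph V) [DecidableRel G.Adj] {R : Type*} [CommSemiring R]
    (wt : V → V → R) (s : V) (δ : ℕ) (o : V) (h : G.Reachable s o) :
    truncBF G wt s δ (G.dist s o + δ) o
      = ∑ t ∈ Finset.Icc (G.dist s o) (G.dist s o + δ), pathSum G wt t s o := by
  rw [truncBF_key G wt s δ _ o h le_rfl]
  rw [Finset.range_eq_Ico, show Finset.Icc (G.dist s o) (G.dist s o + δ)
    = Finset.Ico (G.dist s o) (G.dist s o + δ + 1) by rw [Finset.Ico_add_one_right_eq_Icc]]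
  rw [← Finset.sum_Ico_consecutive _ (Nat.zero_le (G.dist s o)) (by omega)]
  rw [Finset.sum_eq_zero, zero_add]
  intro k hk
  rw [Finset.mem_Ico] at hk
  exact pathSum_eq_zero_of_lt_dist G wt hk.2
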